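/- Let n ≥ 2 and k be integers with 1 ≤ k ≤ n, let a be a real with 0 < a ≤ 1 and g > 0 a real. Then k·g/((k−1)·g/a + n − k) + (n − k)/(k·g/a + n − k − 1) ≥ a. -/
import Mathlib


theorem stmt6 (n k : ℕ) (hn : 2 ≤ n) (hk1 : 1 ≤ k) (hkn : k ≤ n)
    (a g : ℝ) (ha : 0 < a) (ha1 : a ≤ 1) (hg : 0 < g) :
    (k : ℝ) * g / (((k : ℝ) - 1) * g / a + ((n : ℝ) - (k : ℝ))) +
      ((n : ℝ) - (k : ℝ)) / ((k : ℝ) * g / a + ((n : ℝ) - (k : ℝ) - 1)) ≥ a := by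
  have hK : (1 : ℝ) ≤ (k : ℝ) := by exact_mod_cast hk1
  have hx : 0 < g / a := div_pos hg ha
  rcases eq_or_lt_of_le hkn with heq | hlt
  · -- k = n
    subst heq
    have hz : (k : ℝ) - (k : ℝ) = 0 := by ring
    rw [hz, zero_div, add_zero, add_zero]
    have hK2 : (2 : ℝ) ≤ (k : ℝ) := by exact_mod_cast hn
    have hD : 0 < ((k : ℝ) - 1) * g / a := by
      apply div_pos _ ha
      nlinarith
    rw [ge_iff_le, le_div_iff₀ hD]
    rw [div_eq_mul_inv]
    have h2 : a * (((k : ℝ) - 1) * g * a⁻¹) = ((k : ℝ) - 1) * g := by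
      field_simp
    rw [h2]
    nlinarith
  · -- k < n
    have hm : (1 : ℝ) ≤ (n : ℝ) - (k : ℝ) := by
      have : (k : ℝ) + 1 ≤ (n : ℝ) := by exact_mod_cast hlt
      linarith
    have hD1 : 0 < ((k : ℝ) - 1) * g / a + ((n : ℝ) - (k : ℝ)) := by
      have : 0 ≤ ((k : ℝ) - 1) * g / a :=
        div_nonneg (mul_nonneg (by linarith) hg.le) ha.le
      linarith
    have hD2 : 0 < (k : ℝ) * g / a + ((n : ℝ) - (k : ℝ) - 1) := by
      have h1 : 0 < (k : ℝ) * g / a := by positivity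
      linarith
    rw [ge_iff_le, div_add_div _ _ (ne_of_gt hD1) (ne_of_gt hD2),
      le_div_iff₀ (mul_pos hD1 hD2)]
    have hga : (k : ℝ) * g / a = (k : ℝ) * (g / a) := by ring
    have hga' : ((k : ℝ) - 1) * g / a = ((k : ℝ) - 1) * (g / a) := by ring
    have hgx : g = a * (g / a) := by field_simp
    rw [hga, hga']
    set x := g / a with hxdef
    set m := (n : ℝ) - (k : ℝ) with hmdef
    rw [hgx]
    have hD1x : 0 ≤ ((k : ℝ) - 1) * x + m := by
      have := hD1; rw [hga'] at this; linarith
    have h1 : 0 ≤ a * ((k : ℝ) * x ^ 2 - x + m) := by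
      apply mul_nonneg ha.le
      nlinarith [sq_nonneg (x - 1), mul_nonneg (sub_nonneg.2 hK) (sq_nonneg x), hx.le]
    have h2 : 0 ≤ (1 - a) * (m * (((k : ℝ) - 1) * x + m)) := by
      apply mul_nonneg (by linarith)
      exact mul_nonneg (by linarith) hD1x
    nlinarith [h1, h2]
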